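/- Let Ω_R = {1 < x² + y² < 4} ⊂ ℝ² and remove from it the sequence of almost-full circles S_{2n} = {x²+y² = (1+1/(2n))², x < 1−r} and S_{2n+1} = {x²+y² = (1+1/(2n+1))², x > r−1} for fixed 0 < r < 1/4. The resulting open set Ω is a bounded domain with infinite geodesic diameter. -/

import Mathlib

open Set ENNReal

open Set ENNReal

/-- The intrinsic geodesic distance in `Ω`: the infimum of lengths (variations) of
continuous curves joining `x` to `y` inside `Ω`. -/
noncomputable def geoDist {E : Type*} [PseudoEMetricSpace E] (Ω : Set E) (x y : E) : ℝ≥0∞ :=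
  ⨅ (γ : ℝ → E) (_ : ContinuousOn γ (Set.Icc 0 1)) (_ : Set.MapsTo γ (Set.Icc 0 1) Ω)
    (_ : γ 0 = x) (_ : γ 1 = y), eVariationOn γ (Set.Icc 0 1)

/-- The geodesic diameter of `Ω`. -/
noncomputable def geoDiam {E : Type*} [PseudoEMetricSpace E] (Ω : Set E) : ℝ≥0∞ :=
  ⨆ x ∈ Ω, ⨆ y ∈ Ω, geoDist Ω x y

namespace AnnComb
open Real Topology

abbrev E2 := EuclideanSpace ℝ (Fin 2)

noncomputable def mkE (a b : ℝ) : E2 := WithLp.toLp 2 ![a, b]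

@[simp] theorem mkE_zero (a b : ℝ) : mkE a b 0 = a := rfl
@[simp] theorem mkE_one (a b : ℝ) : mkE a b 1 = b := rfl

def nsq (p : E2) : ℝ := (p 0)^2 + (p 1)^2

theorem nsq_nonneg (p : E2) : 0 ≤ nsq p := add_nonneg (sq_nonneg _) (sq_nonneg _)

theorem continuous_nsq : Continuous nsq := by
  have h0 : Continuous fun p : E2 => p 0 := PiLp.continuous_apply 2 _ 0
  have h1 : Continuous fun p : E2 => p 1 := PiLp.continuous_apply 2 _ 1
  exact (h0.pow 2).add (h1.pow 2)

theorem continuous_mkE {X : Type*} [TopologicalSpace X] {f g : X → ℝ}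
    (hf : Continuous f) (hg : Continuous g) : Continuous (fun x => (mkE (f x) (g x))) := by
  have : Continuous fun x : X => (WithLp.equiv 2 (Fin 2 → ℝ)).symm ![f x, g x] := by
    apply PiLp.continuous_toLp _ _ |>.comp
    refine continuous_pi fun i => ?_
    fin_cases i <;> simpa
  exact this

theorem norm_eq_sqrt_nsq (p : E2) : ‖p‖ = Real.sqrt (nsq p) := by
  rw [EuclideanSpace.norm_eq]
  simp [nsq, Fin.sum_univ_two, sq_abs]

theorem abs_sub_le_dist (p q : E2) : |p 0 - q 0| ≤ dist p q := by
  rw [EuclideanSpace.dist_eq, ← Real.sqrt_sq_eq_abs]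
  apply Real.sqrt_le_sqrt
  rw [Fin.sum_univ_two, Real.dist_eq, Real.dist_eq, sq_abs]
  nlinarith [sq_abs (p 1 - q 1), sq_nonneg (p 1 - q 1)]

theorem sq_lt_sq_iff' {a b : ℝ} (ha : 0 ≤ a) (hb : 0 ≤ b) : a^2 < b^2 ↔ a < b := by
  constructor <;> intro h <;> nlinarith

theorem sq_eq_sq_iff' {a b : ℝ} (ha : 0 ≤ a) (hb : 0 ≤ b) : a^2 = b^2 ↔ a = b := by
  constructor <;> intro h
  · nlinarith
  · rw [h]

noncomputable def rho (k : ℕ) : ℝ := 1 + 1/(k:ℝ)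

theorem rho_one : rho 1 = 2 := by norm_num [rho]
theorem rho_two : rho 2 = 3/2 := by norm_num [rho]

theorem one_lt_rho {k : ℕ} (hk : 1 ≤ k) : 1 < rho k := by
  have : (0:ℝ) < k := by exact_mod_cast hk
  have : 0 < 1/(k:ℝ) := by positivity
  simp [rho]; linarith

theorem rho_pos {k : ℕ} : 0 < rho k := by
  have : 0 ≤ 1/(k:ℝ) := by positivity
  simp only [rho]; linarith

theorem rho_le_two {k : ℕ} (hk : 1 ≤ k) : rho k ≤ 2 := by
  have h : (1:ℝ) ≤ k := by exact_mod_cast hk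
  have : 1/(k:ℝ) ≤ 1 := by rw [div_le_one (by linarith)]; linarith
  simp only [rho]; linarith

theorem rho_lt_rho_iff {j k : ℕ} (hj : 1 ≤ j) (hk : 1 ≤ k) : rho k < rho j ↔ j < k := by
  have hj' : (0:ℝ) < j := by exact_mod_cast hj
  have hk' : (0:ℝ) < k := by exact_mod_cast hk
  simp only [rho, add_lt_add_iff_left, one_div, inv_lt_inv₀ hk' hj']
  exact Nat.cast_lt

theorem rho_succ_lt {k : ℕ} : rho (k+1) < rho k ∨ k = 0 := by
  rcases Nat.eq_zero_or_pos k with h | h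
  · exact Or.inr h
  · exact Or.inl ((rho_lt_rho_iff h (by omega)).2 (by omega))

theorem rho_lt_rho {j k : ℕ} (hj : 1 ≤ j) (hjk : j < k) : rho k < rho j :=
  (rho_lt_rho_iff hj (by omega)).2 hjk

def Om (r : ℝ) : Set E2 :=
  {q | 1 < nsq q ∧ nsq q < 4} \
    ((⋃ n : ℕ, {q | nsq q = (1 + 1 / (2 * (n + 1) : ℝ)) ^ 2 ∧ q 0 ≤ 1 - r}) ∪
      ⋃ n : ℕ, {q | nsq q = (1 + 1 / (2 * (n + 1) + 1 : ℝ)) ^ 2 ∧ r - 1 ≤ q 0})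

def gapCond (r : ℝ) (k : ℕ) (p : E2) : Prop := if Even k then 1 - r < p 0 else p 0 < r - 1

theorem mem_Om_iff {r : ℝ} {p : E2} :
    p ∈ Om r ↔ (1 < nsq p ∧ nsq p < 4) ∧
      ∀ k : ℕ, 2 ≤ k → nsq p = rho k ^ 2 → gapCond r k p := by
  unfold Om gapCond
  simp only [mem_diff, mem_setOf_eq, mem_union, mem_iUnion, not_or, not_exists, and_congr_right_iff]
  intro _
  constructor
  · rintro ⟨he, ho⟩ k hk2 hnsq
    by_cases hek : Even k
    · rw [if_pos hek]
      obtain ⟨n, hn⟩ : ∃ n : ℕ, k = 2 * (n + 1) := by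
        obtain ⟨m, hm⟩ := hek; exact ⟨m - 1, by omega⟩
      have hcast : (2 * ((n:ℝ) + 1)) = (k:ℝ) := by push_cast [hn]; ring
      have := he n
      simp only [mem_setOf_eq, not_and] at this
      have h2 := this (by rw [hnsq, rho, hcast])
      linarith [not_le.mp h2]
    · rw [if_neg hek]
      obtain ⟨n, hn⟩ : ∃ n : ℕ, k = 2 * (n + 1) + 1 := by
        rcases Nat.even_or_odd k with h | ⟨m, hm⟩
        · exact absurd h hek
        · exact ⟨m - 1, by omega⟩
      have hcast : (2 * ((n:ℝ) + 1) + 1) = (k:ℝ) := by push_cast [hn]; ring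
      have := ho n
      simp only [mem_setOf_eq, not_and] at this
      have h2 := this (by rw [hnsq, rho, hcast])
      linarith [not_le.mp h2]
  · intro h
    constructor
    · intro n
      simp only [mem_setOf_eq, not_and]
      intro hnsq
      have hk := h (2 * (n + 1)) (by omega) (by
        rw [hnsq, rho]; push_cast; ring_nf)
      rw [if_pos ⟨n+1, by ring⟩] at hk
      intro hle; linarith
    · intro n
      simp only [mem_setOf_eq, not_and]
      intro hnsq
      have hk := h (2 * (n + 1) + 1) (by omega) (by
        rw [hnsq, rho]; push_cast; ring_nf)
      rw [if_neg (by simp [Nat.even_add_one, parity_simps])] at hk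
      intro hle; linarith
theorem nsq_mkE_polar (a θ : ℝ) : nsq (mkE (a * Real.cos θ) (a * Real.sin θ)) = a ^ 2 := by
  simp only [nsq, mkE_zero, mkE_one]
  have := Real.sin_sq_add_cos_sq θ
  ring_nf
  nlinarith [Real.sin_sq_add_cos_sq θ]

theorem exists_polar {p : E2} (hp : 0 < nsq p) :
    ∃ θ ∈ Ioc (-π) π, p = mkE (Real.sqrt (nsq p) * Real.cos θ) (Real.sqrt (nsq p) * Real.sin θ) := by
  set z : ℂ := ⟨p 0, p 1⟩ with hz
  have hz0 : z ≠ 0 := by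
    intro h
    have h0 : p 0 = 0 := congrArg Complex.re h
    have h1 : p 1 = 0 := congrArg Complex.im h
    simp [nsq, h0, h1] at hp
  have habs : ‖z‖ = Real.sqrt (nsq p) := by
    rw [Complex.norm_def, Complex.normSq_apply]
    congr 1
    simp [nsq, hz]; ring
  refine ⟨Complex.arg z, ⟨Complex.neg_pi_lt_arg z, Complex.arg_le_pi z⟩, ?_⟩
  have hc := Complex.norm_mul_cos_arg z
  have hs := Complex.norm_mul_sin_arg z
  rw [habs] at hc hs
  ext i
  fin_cases i
  · exact hc.symm
  · exact hs.symm

theorem rho_le_32 {k : ℕ} (hk : 2 ≤ k) : rho k ≤ 3/2 := by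
  rcases eq_or_lt_of_le hk with h | h
  · rw [← h, rho_two]
  · have := rho_lt_rho (by norm_num) h
    rw [rho_two] at this; linarith

theorem rho_inj {j k : ℕ} (hj : 1 ≤ j) (hk : 1 ≤ k) (h : rho j = rho k) : j = k := by
  rcases lt_trichotomy j k with hlt | he | hlt
  · exact absurd (rho_lt_rho hj hlt) (by rw [h]; exact lt_irrefl _)
  · exact he
  · exact absurd (rho_lt_rho hk hlt) (by rw [h]; exact lt_irrefl _)

def Rann (k : ℕ) : Set E2 := {p | rho (k+1)^2 < nsq p ∧ nsq p < rho k ^2}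
def Gap (r : ℝ) (k : ℕ) : Set E2 := {p | nsq p = rho k^2 ∧ gapCond r k p}

theorem isOpen_Rann (k : ℕ) : IsOpen (Rann k) := by
  have : Rann k = nsq ⁻¹' (Ioo (rho (k+1)^2) (rho k ^2)) := rfl
  rw [this]
  exact isOpen_Ioo.preimage continuous_nsq

theorem Rann_subset_Om {r : ℝ} {k : ℕ} (hk : 1 ≤ k) : Rann k ⊆ Om r := by
  intro p hp
  obtain ⟨h1, h2⟩ := hp
  have hrk1 : 1 < rho (k+1) := one_lt_rho (by omega)
  have hrk2 : rho k ≤ 2 := rho_le_two hk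
  have hrkpos : (0:ℝ) < rho k := rho_pos
  rw [mem_Om_iff]
  refine ⟨⟨by nlinarith, by nlinarith⟩, fun j hj2 hj => ?_⟩
  exfalso
  have hjpos : (0:ℝ) ≤ rho j := rho_pos.le
  have hl : rho (k+1) < rho j := by
    rw [← sq_lt_sq_iff' rho_pos.le hjpos, ← hj]; exact h1
  have hrr : rho j < rho k := by
    rw [← sq_lt_sq_iff' hjpos hrkpos.le, ← hj]; exact h2
  have h1' := (rho_lt_rho_iff (by omega : 1 ≤ j) (by omega : 1 ≤ k + 1)).1 hl
  have h2' := (rho_lt_rho_iff hk (by omega : 1 ≤ j)).1 hrr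
  omega

theorem Gap_subset_Om {r : ℝ} {k : ℕ} (hk : 2 ≤ k) : Gap r k ⊆ Om r := by
  intro p hp
  obtain ⟨h1, h2⟩ := hp
  have hrk1 : 1 < rho k := one_lt_rho (by omega)
  have hrk32 : rho k ≤ 3/2 := rho_le_32 hk
  rw [mem_Om_iff]
  refine ⟨⟨by rw [h1]; nlinarith, by rw [h1]; nlinarith⟩, fun j hj2 hj => ?_⟩
  have : rho j = rho k := by
    rw [← sq_eq_sq_iff' rho_pos.le rho_pos.le, ← hj, h1]
  have : j = k := rho_inj (by omega) (by omega) this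
  rwa [this]

noncomputable def pol : ℝ × ℝ → E2 := fun x => mkE (x.1 * Real.cos x.2) (x.1 * Real.sin x.2)

theorem continuous_pol : Continuous pol := by
  apply continuous_mkE
  · exact continuous_fst.mul (Real.continuous_cos.comp continuous_snd)
  · exact continuous_fst.mul (Real.continuous_sin.comp continuous_snd)

theorem Rann_eq_image {k : ℕ} (hk : 1 ≤ k) :
    Rann k = pol '' (Ioo (rho (k+1)) (rho k) ×ˢ univ) := by
  ext p
  constructor
  · rintro ⟨h1, h2⟩
    have h0 : 0 < nsq p := lt_trans (by nlinarith [one_lt_rho (show 1 ≤ k+1 by omega)]) h1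
    obtain ⟨θ, _, hp⟩ := exists_polar h0
    have hs2 : Real.sqrt (nsq p) ^ 2 = nsq p := Real.sq_sqrt (nsq_nonneg p)
    refine ⟨(Real.sqrt (nsq p), θ), ⟨⟨?_, ?_⟩, trivial⟩, hp.symm⟩
    · rw [← sq_lt_sq_iff' rho_pos.le (Real.sqrt_nonneg _), hs2]; exact h1
    · rw [← sq_lt_sq_iff' (Real.sqrt_nonneg _) rho_pos.le, hs2]; exact h2
  · rintro ⟨⟨a, θ⟩, ⟨⟨ha1, ha2⟩, -⟩, rfl⟩
    have hapos : 0 < a := lt_trans rho_pos ha1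
    constructor
    · rw [show nsq (pol (a, θ)) = a ^ 2 from nsq_mkE_polar a θ]
      exact (sq_lt_sq_iff' rho_pos.le hapos.le).2 ha1
    · rw [show nsq (pol (a, θ)) = a ^ 2 from nsq_mkE_polar a θ]
      exact (sq_lt_sq_iff' hapos.le rho_pos.le).2 ha2

theorem isPreconnected_Rann {k : ℕ} (hk : 1 ≤ k) : IsPreconnected (Rann k) := by
  rw [Rann_eq_image hk]
  exact (isPreconnected_Ioo.prod isPreconnected_univ).image _ continuous_pol.continuousOn

theorem mem_closure_Rann {k : ℕ} (hk : 1 ≤ k) {p : E2}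
    (hp : nsq p = rho k ^ 2 ∨ nsq p = rho (k+1) ^ 2) : p ∈ closure (Rann k) := by
  have hlt : rho (k+1) < rho k := rho_lt_rho hk (by omega)
  obtain ⟨a, hane, ha⟩ : ∃ a, a ∈ Icc (rho (k+1)) (rho k) ∧ nsq p = a ^ 2 := by
    rcases hp with h | h
    · exact ⟨rho k, ⟨hlt.le, le_refl _⟩, h⟩
    · exact ⟨rho (k+1), ⟨le_refl _, hlt.le⟩, h⟩
  have hapos : 0 < a := lt_of_lt_of_le (lt_trans one_pos (one_lt_rho (by omega))) hane.1
  have h0 : 0 < nsq p := by rw [ha]; positivity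
  obtain ⟨θ, _, hpp⟩ := exists_polar h0
  have hsa : Real.sqrt (nsq p) = a := by rw [ha, Real.sqrt_sq hapos.le]
  rw [hsa] at hpp
  set f : ℝ → E2 := fun t => pol (t, θ) with hf
  have hfc : Continuous f := continuous_pol.comp (continuous_id.prodMk continuous_const)
  have himg : f '' (Ioo (rho (k+1)) (rho k)) ⊆ Rann k := by
    rintro q ⟨t, ⟨ht1, ht2⟩, rfl⟩
    have htpos : 0 < t := lt_trans rho_pos ht1
    constructor
    · rw [show nsq (f t) = t ^ 2 from nsq_mkE_polar t θ]
      exact (sq_lt_sq_iff' rho_pos.le htpos.le).2 ht1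
    · rw [show nsq (f t) = t ^ 2 from nsq_mkE_polar t θ]
      exact (sq_lt_sq_iff' htpos.le rho_pos.le).2 ht2
  have : p ∈ f '' (closure (Ioo (rho (k+1)) (rho k))) := by
    rw [closure_Ioo hlt.ne]
    exact ⟨a, hane, hpp.symm⟩
  exact closure_mono himg (image_closure_subset_closure_image hfc this)


theorem isPreconnected_Gap {r : ℝ} (hr0 : 0 < r) (hr : r < 1/4) {k : ℕ} (hk : 2 ≤ k) :
    IsPreconnected (Gap r k) := by
  set a := rho k with ha
  have ha1 : 1 < a := one_lt_rho (by omega)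
  have hapos : (0:ℝ) < a := by linarith
  have key : ∀ p : E2, nsq p = a ^ 2 →
      ∃ θ ∈ Ioc (-π) π, p = pol (a, θ) ∧ p 0 = a * Real.cos θ := by
    intro p hp
    have h0 : 0 < nsq p := by rw [hp]; positivity
    obtain ⟨θ, hθ, hpp⟩ := exists_polar h0
    have hsa : Real.sqrt (nsq p) = a := by rw [hp, Real.sqrt_sq hapos.le]
    rw [hsa] at hpp
    exact ⟨θ, hθ, hpp, by rw [hpp]; rfl⟩
  by_cases hek : Even k
  · -- right gap: cos θ > (1-r)/a
    set c : ℝ := (1 - r) / a with hc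
    have hcmem : -1 ≤ c ∧ c < 1 := by
      constructor
      · rw [hc, le_div_iff₀ hapos]; nlinarith
      · rw [hc, div_lt_one hapos]; linarith
    set θ₀ := Real.arccos c with hθ₀
    have hθ₀pos : 0 < θ₀ := Real.arccos_pos.2 hcmem.2
    have hθ₀pi : θ₀ ≤ π := Real.arccos_le_pi c
    have hcosθ₀ : Real.cos θ₀ = c := Real.cos_arccos hcmem.1 hcmem.2.le
    have himg : Gap r k = (fun θ => pol (a, θ)) '' (Ioo (-θ₀) θ₀) := by
      ext p
      constructor
      · rintro ⟨h1, h2⟩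
        rw [gapCond, if_pos hek] at h2
        obtain ⟨θ, hθmem, hpp, hp0⟩ := key p h1
        have hcos : c < Real.cos θ := by
          rw [hc, div_lt_iff₀ hapos, mul_comm]
          rw [hp0] at h2; linarith
        refine ⟨θ, ⟨?_, ?_⟩, hpp.symm⟩
        · by_contra hcon
          push_neg at hcon
          have h1' : θ₀ ≤ -θ := by linarith
          have : Real.cos (-θ) ≤ Real.cos θ₀ :=
            Real.cos_le_cos_of_nonneg_of_le_pi (by linarith) (by linarith [hθmem.1]) h1'
          rw [Real.cos_neg, hcosθ₀] at this; linarith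
        · by_contra hcon
          push_neg at hcon
          have : Real.cos θ ≤ Real.cos θ₀ :=
            Real.cos_le_cos_of_nonneg_of_le_pi (by linarith) hθmem.2 hcon
          rw [hcosθ₀] at this; linarith
      · rintro ⟨θ, ⟨hθ1, hθ2⟩, rfl⟩
        have hcos : c < Real.cos θ := by
          rw [← hcosθ₀, ← Real.cos_abs θ]
          exact Real.cos_lt_cos_of_nonneg_of_le_pi (abs_nonneg θ) hθ₀pi (abs_lt.2 ⟨hθ1, hθ2⟩)
        refine ⟨nsq_mkE_polar a θ, ?_⟩
        rw [gapCond, if_pos hek]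
        show 1 - r < a * Real.cos θ
        rw [hc, div_lt_iff₀ hapos, mul_comm] at hcos
        linarith
    rw [himg]
    exact isPreconnected_Ioo.image _
      (continuous_pol.comp (continuous_const.prodMk continuous_id)).continuousOn
  · -- left gap: cos θ < (r-1)/a
    set c : ℝ := (r - 1) / a with hc
    have hcmem : -1 < c ∧ c ≤ 1 := by
      constructor
      · rw [hc, lt_div_iff₀ hapos]; nlinarith
      · rw [hc, div_le_one hapos]; linarith
    set θ₀ := Real.arccos c with hθ₀
    have hθ₀pos : 0 ≤ θ₀ := Real.arccos_nonneg c
    have hθ₀pi : θ₀ < π := by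
      rcases lt_or_eq_of_le (Real.arccos_le_pi c) with h | h
      · exact h
      · exfalso
        have := Real.cos_arccos hcmem.1.le hcmem.2
        rw [h, Real.cos_pi] at this
        linarith [hcmem.1]
    have hcosθ₀ : Real.cos θ₀ = c := Real.cos_arccos hcmem.1.le hcmem.2
    have hπ := Real.pi_pos
    have himg : Gap r k = (fun θ => pol (a, θ)) '' (Ioo θ₀ (2*π - θ₀)) := by
      ext p
      constructor
      · rintro ⟨h1, h2⟩
        rw [gapCond, if_neg hek] at h2
        obtain ⟨θp, hθmem, hpp, hp0⟩ := key p h1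
        have hcos : Real.cos θp < c := by
          rw [hc, lt_div_iff₀ hapos, mul_comm]
          rw [hp0] at h2; linarith
        rcases le_or_gt 0 θp with hsgn | hsgn
        · refine ⟨θp, ⟨?_, ?_⟩, hpp.symm⟩
          · by_contra hcon
            push_neg at hcon
            have : Real.cos θ₀ ≤ Real.cos θp :=
              Real.cos_le_cos_of_nonneg_of_le_pi hsgn hθ₀pi.le hcon
            rw [hcosθ₀] at this; linarith
          · linarith [hθmem.2]
        · refine ⟨θp + 2*π, ⟨by linarith [hθmem.1], ?_⟩, ?_⟩
          · have hneg : 0 < -θp := by linarith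
            have : Real.cos θ₀ ≤ Real.cos (-θp) ∨ θ₀ < -θp := by
              rcases le_or_gt (-θp) θ₀ with h | h
              · exact Or.inl (Real.cos_le_cos_of_nonneg_of_le_pi hneg.le hθ₀pi.le h)
              · exact Or.inr h
            rcases this with h | h
            · rw [Real.cos_neg, hcosθ₀] at h; linarith
            · linarith
          · show pol (a, θp + 2*π) = p
            rw [hpp]
            unfold pol
            rw [Real.cos_add_two_pi, Real.sin_add_two_pi]
      · rintro ⟨θ, ⟨hθ1, hθ2⟩, rfl⟩
        have hcos : Real.cos θ < c := by
          rcases le_or_gt θ π with h | h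
          · rw [← hcosθ₀]
            exact Real.cos_lt_cos_of_nonneg_of_le_pi hθ₀pos h hθ1
          · rw [← Real.cos_two_pi_sub, ← hcosθ₀]
            exact Real.cos_lt_cos_of_nonneg_of_le_pi hθ₀pos (by linarith) (by linarith)
        refine ⟨nsq_mkE_polar a θ, ?_⟩
        rw [gapCond, if_neg hek]
        show a * Real.cos θ < r - 1
        rw [hc, lt_div_iff₀ hapos, mul_comm] at hcos
        linarith
    rw [himg]
    exact isPreconnected_Ioo.image _
      (continuous_pol.comp (continuous_const.prodMk continuous_id)).continuousOn


theorem mem_Om_cases {r : ℝ} {p : E2} (hp : p ∈ Om r) :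
    (∃ k, 1 ≤ k ∧ p ∈ Rann k) ∨ (∃ k, 2 ≤ k ∧ p ∈ Gap r k) := by
  obtain ⟨⟨h1, h4⟩, hall⟩ := mem_Om_iff.1 hp
  by_cases hcirc : ∃ k, 2 ≤ k ∧ nsq p = rho k ^ 2
  · obtain ⟨k, hk2, hk⟩ := hcirc
    exact Or.inr ⟨k, hk2, hk, hall k hk2 hk⟩
  · push_neg at hcirc
    left
    set s := Real.sqrt (nsq p) with hs
    have hs2 : s ^ 2 = nsq p := Real.sq_sqrt (nsq_nonneg p)
    have hsnn : 0 ≤ s := Real.sqrt_nonneg _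
    have hs1 : 1 < s := by
      have := (sq_lt_sq_iff' (by norm_num : (0:ℝ) ≤ 1) hsnn)
      rw [one_pow, hs2] at this
      exact this.1 h1
    have hs4 : s < 2 := by
      have := (sq_lt_sq_iff' hsnn (by norm_num : (0:ℝ) ≤ 2))
      rw [hs2, show (2:ℝ)^2 = 4 by norm_num] at this
      exact this.1 h4
    set k := ⌊1/(s-1)⌋₊ with hkdef
    have hspos : (0:ℝ) < s - 1 := by linarith
    have hk1 : 1 ≤ k := by
      rw [hkdef]
      rw [Nat.le_floor_iff (by positivity)]
      rw [Nat.cast_one, le_div_iff₀ hspos]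
      linarith
    have hfl : (k:ℝ) ≤ 1/(s-1) := Nat.floor_le (by positivity)
    have hfl2 : 1/(s-1) < (k:ℝ) + 1 := by
      have := Nat.lt_floor_add_one (1/(s-1))
      exact_mod_cast this
    have hkpos : (0:ℝ) < k := by exact_mod_cast hk1
    have hsle : s ≤ rho k := by
      have h := (le_div_iff₀ hspos).1 hfl
      rw [rho]
      rw [show 1 + 1/(k:ℝ) = 1 + 1/(k:ℝ) from rfl]
      have : s - 1 ≤ 1/(k:ℝ) := by
        rw [le_div_iff₀ hkpos]; nlinarith
      linarith
    have hslt : s < rho k := by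
      rcases lt_or_eq_of_le hsle with h | h
      · exact h
      · exfalso
        rcases Nat.lt_or_ge k 2 with hk2 | hk2
        · interval_cases k
          · rw [rho_one] at h; linarith
        · exact hcirc k hk2 (by rw [← hs2, h])
    have hgt : rho (k+1) < s := by
      have h := (div_lt_iff₀ hspos).1 hfl2
      rw [rho]
      have hk1pos : (0:ℝ) < (k:ℝ) + 1 := by linarith
      have : 1/((k:ℝ)+1) < s - 1 := by
        rw [div_lt_iff₀ hk1pos]; nlinarith
      push_cast
      linarith
    refine ⟨k, hk1, ?_, ?_⟩
    · rw [← hs2]; exact (sq_lt_sq_iff' rho_pos.le hsnn).2 hgt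
    · rw [← hs2]; exact (sq_lt_sq_iff' hsnn rho_pos.le).2 hslt

theorem isOpen_gapCondSet {r : ℝ} (k : ℕ) : IsOpen {q : E2 | gapCond r k q} := by
  by_cases he : Even k
  · simp only [gapCond, if_pos he]
    exact isOpen_lt continuous_const (PiLp.continuous_apply 2 _ (0 : Fin 2) : Continuous fun q : E2 => q 0)
  · simp only [gapCond, if_neg he]
    exact isOpen_lt (PiLp.continuous_apply 2 _ (0 : Fin 2) : Continuous fun q : E2 => q 0) continuous_const

theorem band_subset_Om {r : ℝ} {m : ℕ} :
    {q : E2 | rho (m+3)^2 < nsq q ∧ nsq q < rho (m+1)^2 ∧ gapCond r (m+2) q} ⊆ Om r := by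
  rintro q ⟨h1, h2, h3⟩
  have ha : 1 < rho (m+3) := one_lt_rho (by omega)
  have hb : rho (m+1) ≤ 2 := rho_le_two (by omega)
  have hbpos : (0:ℝ) < rho (m+1) := rho_pos
  rw [mem_Om_iff]
  refine ⟨⟨by nlinarith, by nlinarith⟩, fun j hj2 hj => ?_⟩
  have hjnn : (0:ℝ) ≤ rho j := rho_pos.le
  have hl : rho (m+3) < rho j := by
    rw [← sq_lt_sq_iff' rho_pos.le hjnn, ← hj]; exact h1
  have hrr : rho j < rho (m+1) := by
    rw [← sq_lt_sq_iff' hjnn hbpos.le, ← hj]; exact h2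
  have h1' := (rho_lt_rho_iff (by omega : 1 ≤ j) (by omega : 1 ≤ m + 3)).1 hl
  have h2' := (rho_lt_rho_iff (by omega : 1 ≤ m+1) (by omega : 1 ≤ j)).1 hrr
  have : j = m + 2 := by omega
  rwa [this]

theorem isOpen_Om {r : ℝ} : IsOpen (Om r) := by
  rw [isOpen_iff_forall_mem_open]
  intro p hp
  rcases mem_Om_cases hp with ⟨k, hk1, hpk⟩ | ⟨k, hk2, hpk⟩
  · exact ⟨Rann k, Rann_subset_Om hk1, isOpen_Rann k, hpk⟩
  · obtain ⟨m, rfl⟩ : ∃ m, k = m + 2 := ⟨k - 2, by omega⟩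
    obtain ⟨hpc, hpg⟩ := hpk
    refine ⟨{q : E2 | rho (m+3)^2 < nsq q ∧ nsq q < rho (m+1)^2 ∧ gapCond r (m+2) q},
      band_subset_Om, ?_, ?_, ?_, ?_⟩
    · have : {q : E2 | rho (m+3)^2 < nsq q ∧ nsq q < rho (m+1)^2 ∧ gapCond r (m+2) q} =
        (nsq ⁻¹' (Ioo (rho (m+3)^2) (rho (m+1)^2))) ∩ {q | gapCond r (m+2) q} := by
        ext q; simp [mem_setOf_eq, and_assoc]
      rw [this]
      exact (isOpen_Ioo.preimage continuous_nsq).inter (isOpen_gapCondSet _)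
    · rw [hpc]
      exact (sq_lt_sq_iff' rho_pos.le rho_pos.le).2 (rho_lt_rho (by omega) (by omega))
    · rw [hpc]
      exact (sq_lt_sq_iff' rho_pos.le rho_pos.le).2 (rho_lt_rho (by omega) (by omega))
    · exact hpg

theorem bounded_Om {r : ℝ} : Bornology.IsBounded (Om r) := by
  apply (Metric.isBounded_closedBall (x := (0:E2)) (r := 2)).subset
  intro p hp
  obtain ⟨⟨h1, h4⟩, -⟩ := hp
  rw [Metric.mem_closedBall, dist_zero_right, norm_eq_sqrt_nsq]
  calc Real.sqrt (nsq p) ≤ Real.sqrt 4 := Real.sqrt_le_sqrt h4.le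
    _ = 2 := by rw [show (4:ℝ) = 2^2 by norm_num, Real.sqrt_sq (by norm_num : (0:ℝ) ≤ 2)]


theorem precon_union_of_closure {α : Type*} [TopologicalSpace α] {s t : Set α} {x : α}
    (hs : IsPreconnected s) (ht : IsPreconnected t) (hxs : x ∈ s) (hxt : x ∈ closure t) :
    IsPreconnected (s ∪ t) := by
  have h1 : IsPreconnected (t ∪ {x}) :=
    ht.subset_closure subset_union_left
      (union_subset subset_closure (singleton_subset_iff.2 hxt))
  have h2 : IsPreconnected (s ∪ (t ∪ {x})) :=
    IsPreconnected.union x hxs (mem_union_right _ (mem_singleton x)) hs h1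
  have heq : s ∪ (t ∪ {x}) = s ∪ t := by
    ext y
    simp only [mem_union, mem_singleton_iff]
    constructor
    · rintro (h | h | rfl)
      · exact Or.inl h
      · exact Or.inr h
      · exact Or.inl hxs
    · rintro (h | h)
      · exact Or.inl h
      · exact Or.inr (Or.inl h)
  rwa [heq] at h2

def V (r : ℝ) : ℕ → Set E2
  | 0 => Rann 1
  | (j+1) => Rann (j+2) ∪ Gap r (j+2)

def UU (r : ℝ) : ℕ → Set E2
  | 0 => V r 0
  | (m+1) => V r (m+1) ∪ UU r m

theorem V_subset_Om {r : ℝ} (j : ℕ) : V r j ⊆ Om r := by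
  cases j with
  | zero => exact Rann_subset_Om (by omega)
  | succ m => exact union_subset (Rann_subset_Om (by omega)) (Gap_subset_Om (by omega))

theorem UU_subset_Om {r : ℝ} (m : ℕ) : UU r m ⊆ Om r := by
  induction m with
  | zero => exact V_subset_Om 0
  | succ m ih => exact union_subset (V_subset_Om (m+1)) ih

noncomputable def x0 : E2 := mkE (7/4) 0

theorem x0_mem_Rann1 : x0 ∈ Rann 1 := by
  constructor
  · show rho 2 ^ 2 < nsq x0
    rw [rho_two]
    simp [nsq, x0]
    norm_num
  · show nsq x0 < rho 1 ^ 2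
    rw [rho_one]
    simp [nsq, x0]
    norm_num

theorem x0_mem_UU {r : ℝ} (m : ℕ) : x0 ∈ UU r m := by
  induction m with
  | zero => exact x0_mem_Rann1
  | succ m ih => exact mem_union_right _ ih

theorem Rann_succ_subset_UU {r : ℝ} (m : ℕ) : Rann (m+1) ⊆ UU r m := by
  cases m with
  | zero => exact subset_refl _
  | succ j => exact fun p hp => mem_union_left _ (mem_union_left _ hp)

noncomputable def gapwit (k : ℕ) : E2 :=
  if Even k then mkE (rho k) 0 else mkE (-(rho k)) 0

theorem gapwit_nsq (k : ℕ) : nsq (gapwit k) = rho k ^ 2 := by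
  unfold gapwit
  split <;> simp [nsq] <;> ring

theorem gapwit_mem_Gap {r : ℝ} (hr0 : 0 < r) {k : ℕ} (hk : 2 ≤ k) : gapwit k ∈ Gap r k := by
  have h1 : 1 < rho k := one_lt_rho (by omega)
  refine ⟨gapwit_nsq k, ?_⟩
  unfold gapCond gapwit
  by_cases he : Even k
  · rw [if_pos he, if_pos he]
    show 1 - r < rho k
    linarith
  · rw [if_neg he, if_neg he]
    show -(rho k) < r - 1
    linarith

theorem precon_V {r : ℝ} (hr0 : 0 < r) (hr : r < 1/4) (j : ℕ) : IsPreconnected (V r j) := by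
  cases j with
  | zero => exact isPreconnected_Rann (by omega)
  | succ m =>
    have hGap : Gap r (m+2) ⊆ closure (Rann (m+2)) := fun p hp =>
      mem_closure_Rann (by omega) (Or.inl hp.1)
    exact (isPreconnected_Rann (show 1 ≤ m+2 by omega)).subset_closure
      subset_union_left (union_subset subset_closure hGap)

theorem precon_UU {r : ℝ} (hr0 : 0 < r) (hr : r < 1/4) (m : ℕ) : IsPreconnected (UU r m) := by
  induction m with
  | zero => exact precon_V hr0 hr 0
  | succ m ih =>
    apply precon_union_of_closure (x := gapwit (m+2)) (precon_V hr0 hr (m+1)) ih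
    · exact mem_union_right _ (gapwit_mem_Gap hr0 (by omega))
    · apply closure_mono (Rann_succ_subset_UU m)
      exact mem_closure_Rann (by omega) (Or.inr (gapwit_nsq (m+2)))

theorem isConnected_Om {r : ℝ} (hr0 : 0 < r) (hr : r < 1/4) : IsConnected (Om r) := by
  refine ⟨⟨x0, Rann_subset_Om (by omega) x0_mem_Rann1⟩, isPreconnected_of_forall x0 ?_⟩
  intro y hy
  rcases mem_Om_cases hy with ⟨k, hk1, hyk⟩ | ⟨k, hk2, hyk⟩
  · obtain ⟨m, rfl⟩ : ∃ m, k = m + 1 := ⟨k - 1, by omega⟩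
    exact ⟨UU r m, UU_subset_Om m, x0_mem_UU m, Rann_succ_subset_UU m hyk,
      precon_UU hr0 hr m⟩
  · obtain ⟨m, rfl⟩ : ∃ m, k = m + 2 := ⟨k - 2, by omega⟩
    exact ⟨UU r (m+1), UU_subset_Om (m+1), x0_mem_UU (m+1),
      mem_union_left _ (mem_union_right _ hyk), precon_UU hr0 hr (m+1)⟩



open ENNReal in
theorem crossing {r : ℝ} (hr : r < 1/4) {m : ℕ} (hm : 2 ≤ m)
    {γ : ℝ → E2} (hγc : ContinuousOn γ (Icc 0 1)) (hγm : MapsTo γ (Icc 0 1) (Om r))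
    (h0 : nsq (γ 0) < rho m ^ 2) (h1 : ∀ k, 2 ≤ k → k ≤ m → rho k ^ 2 ≤ nsq (γ 1)) :
    ((m - 2 : ℕ) : ℝ≥0∞) * ENNReal.ofReal (3/2) ≤ eVariationOn γ (Icc 0 1) := by
  set f : ℝ → ℝ := fun t => nsq (γ t) with hf
  have hfc : ContinuousOn f (Icc 0 1) := continuous_nsq.comp_continuousOn hγc
  set S : ℕ → Set ℝ := fun k => Icc (0:ℝ) 1 ∩ f ⁻¹' (Ici (rho k ^ 2)) with hS
  have hSclosed : ∀ k, IsClosed (S k) := fun k =>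
    hfc.preimage_isClosed_of_isClosed isClosed_Icc isClosed_Ici
  have hSne : ∀ k, 2 ≤ k → k ≤ m → (S k).Nonempty := fun k hk2 hkm =>
    ⟨1, ⟨zero_le_one, le_refl 1⟩, h1 k hk2 hkm⟩
  have hSbdd : ∀ k, BddBelow (S k) := fun k => ⟨0, fun t ht => ht.1.1⟩
  set T : ℕ → ℝ := fun k => sInf (S k) with hT
  have hTmem : ∀ k, 2 ≤ k → k ≤ m → T k ∈ S k := fun k hk2 hkm =>
    (hSclosed k).csInf_mem (hSne k hk2 hkm) (hSbdd k)
  have hrhole : ∀ k, 2 ≤ k → k ≤ m → rho m ≤ rho k := by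
    intro k hk2 hkm
    rcases eq_or_lt_of_le hkm with h | h
    · rw [h]
    · exact (rho_lt_rho (by omega) h).le
  have hfT : ∀ k, 2 ≤ k → k ≤ m → f (T k) = rho k ^ 2 := by
    intro k hk2 hkm
    obtain ⟨hTin, hTge⟩ := hTmem k hk2 hkm
    rcases eq_or_lt_of_le (show rho k ^ 2 ≤ f (T k) from hTge) with h | hlt
    · exact h.symm
    · exfalso
      have hT0 : 0 < T k := by
        rcases eq_or_lt_of_le hTin.1 with h | h
        · exfalso
          have : f 0 < rho k ^ 2 := by
            calc f 0 < rho m ^ 2 := h0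
              _ ≤ rho k ^ 2 := by
                have := hrhole k hk2 hkm
                nlinarith [rho_pos (k := m), rho_pos (k := k)]
          have hTge' : rho k ^ 2 ≤ f (T k) := hTge
          rw [← h] at hTge'
          linarith
        · exact h
      have hclos : T k ∈ closure (Ico 0 (T k)) := by
        rw [closure_Ico hT0.ne]
        exact ⟨hT0.le, le_refl _⟩
      have hne : (𝓝[Ico 0 (T k)] (T k)).NeBot := mem_closure_iff_nhdsWithin_neBot.1 hclos
      have hcw : ContinuousWithinAt f (Ico 0 (T k)) (T k) := by
        apply (hfc (T k) hTin).mono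
        intro t ht
        exact ⟨ht.1, le_trans ht.2.le hTin.2⟩
      have hev : ∀ᶠ t in 𝓝[Ico 0 (T k)] (T k), rho k ^ 2 < f t :=
        hcw (Ioi_mem_nhds hlt)
      obtain ⟨t, htf, htmem⟩ := (hev.and eventually_mem_nhdsWithin).exists
      have htS : t ∈ S k := ⟨⟨htmem.1, le_trans htmem.2.le hTin.2⟩, htf.le⟩
      have := csInf_le (hSbdd k) htS
      have : T k ≤ t := this
      linarith [htmem.2]
  have hgap : ∀ k, 2 ≤ k → k ≤ m → gapCond r k (γ (T k)) := by
    intro k hk2 hkm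
    exact (mem_Om_iff.1 (hγm (hTmem k hk2 hkm).1)).2 k hk2 (hfT k hk2 hkm)
  have hanti : ∀ j k, 2 ≤ j → j ≤ k → k ≤ m → T k ≤ T j := by
    intro j k hj2 hjk hkm
    apply csInf_le_csInf (hSbdd k) (hSne j hj2 (le_trans hjk hkm))
    intro t ht
    refine ⟨ht.1, ?_⟩
    have hrr : rho k ≤ rho j := by
      rcases eq_or_lt_of_le hjk with h | h
      · rw [h]
      · exact (rho_lt_rho (by omega : 1 ≤ j) h).le
    have : rho k ^ 2 ≤ rho j ^ 2 := by nlinarith [rho_pos (k := k), rho_pos (k := j)]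
    exact le_trans this ht.2
  set u : ℕ → ℝ := fun j => T (m - min j (m - 2)) with hu
  have humono : Monotone u := by
    intro a b hab
    have h1a : 2 ≤ m - min b (m-2) := by omega
    have h2a : m - min b (m-2) ≤ m - min a (m-2) := by omega
    have h3a : m - min a (m-2) ≤ m := by omega
    exact hanti _ _ h1a h2a h3a
  have humem : ∀ j, u j ∈ Icc (0:ℝ) 1 := by
    intro j
    exact (hTmem _ (by omega) (by omega)).1
  have hsum := eVariationOn.sum_le (f := γ) (n := m - 2) humono humem
  refine le_trans ?_ hsum
  have hterm : ∀ i ∈ Finset.range (m-2),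
      ENNReal.ofReal (3/2) ≤ edist (γ (u (i+1))) (γ (u i)) := by
    intro i hi
    rw [Finset.mem_range] at hi
    have hki : m - min i (m-2) = m - i := by omega
    have hki1 : m - min (i+1) (m-2) = m - (i+1) := by omega
    have hg1 : gapCond r (m - i) (γ (T (m - i))) := hgap _ (by omega) (by omega)
    have hg2 : gapCond r (m - (i+1)) (γ (T (m - (i+1)))) := hgap _ (by omega) (by omega)
    have hx : 3/2 ≤ |γ (u (i+1)) 0 - γ (u i) 0| := by
      rw [hu]
      simp only [hki, hki1]
      unfold gapCond at hg1 hg2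
      have hpar : Even (m - i) ↔ ¬ Even (m - (i+1)) := by
        constructor
        · intro h h2
          obtain ⟨a, ha⟩ := h; obtain ⟨b, hb⟩ := h2; omega
        · intro h
          rcases Nat.even_or_odd (m - i) with h1 | h1
          · exact h1
          · exfalso; apply h; obtain ⟨a, ha⟩ := h1
            exact ⟨a, by omega⟩
      by_cases he : Even (m - i)
      · rw [if_pos he] at hg1
        rw [if_neg (hpar.1 he)] at hg2
        rw [le_abs]
        right
        linarith
      · rw [if_neg he] at hg1
        have he2 : Even (m - (i+1)) := by
          by_contra h2
          exact he (hpar.2 h2)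
        rw [if_pos he2] at hg2
        rw [le_abs]
        left
        linarith
    calc ENNReal.ofReal (3/2) ≤ ENNReal.ofReal (dist (γ (u (i+1))) (γ (u i))) :=
          ENNReal.ofReal_le_ofReal (le_trans hx (abs_sub_le_dist _ _))
      _ = edist (γ (u (i+1))) (γ (u i)) := (edist_dist _ _).symm
  calc ((m - 2 : ℕ) : ℝ≥0∞) * ENNReal.ofReal (3/2)
      = (Finset.range (m-2)).card • ENNReal.ofReal (3/2) := by
        rw [Finset.card_range, nsmul_eq_mul]
    _ ≤ ∑ i ∈ Finset.range (m-2), edist (γ (u (i+1))) (γ (u i)) :=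
        Finset.card_nsmul_le_sum _ _ _ hterm


noncomputable def pm (m : ℕ) : E2 := mkE 0 (1 + 2/(2*(m:ℝ)+1))

theorem pm_nsq (m : ℕ) : nsq (pm m) = (1 + 2/(2*(m:ℝ)+1)) ^ 2 := by
  simp [nsq, pm]

theorem pm_b_pos (m : ℕ) : 1 < 1 + 2/(2*(m:ℝ)+1) ∧ 1 + 2/(2*(m:ℝ)+1) ≤ 3 := by
  have h1 : (0:ℝ) < 2*(m:ℝ)+1 := by positivity
  constructor
  · have : (0:ℝ) < 2/(2*(m:ℝ)+1) := by positivity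
    linarith
  · have : 2/(2*(m:ℝ)+1) ≤ 2 := by
      rw [div_le_iff₀ h1]; nlinarith [Nat.cast_nonneg (α := ℝ) m]
    linarith

theorem pm_mem {r : ℝ} {m : ℕ} (hm : 2 ≤ m) : pm m ∈ Om r := by
  have hmr : (2:ℝ) ≤ (m:ℝ) := by exact_mod_cast hm
  have hden : (0:ℝ) < 2*(m:ℝ)+1 := by linarith
  have hb1 : 1 < 1 + 2/(2*(m:ℝ)+1) := by
    have : (0:ℝ) < 2/(2*(m:ℝ)+1) := by positivity
    linarith
  have hb2 : 1 + 2/(2*(m:ℝ)+1) < 2 := by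
    have : 2/(2*(m:ℝ)+1) < 1 := by rw [div_lt_one hden]; linarith
    linarith
  rw [mem_Om_iff]
  refine ⟨⟨by rw [pm_nsq]; nlinarith, by rw [pm_nsq]; nlinarith⟩, fun k hk2 hk => ?_⟩
  exfalso
  rw [pm_nsq] at hk
  have hkpos : (0:ℝ) < (k:ℝ) := by
    have : (2:ℝ) ≤ (k:ℝ) := by exact_mod_cast hk2
    linarith
  have hbeq : 1 + 2/(2*(m:ℝ)+1) = rho k := by
    rw [← sq_eq_sq_iff' (by linarith) rho_pos.le, ← hk]
  have h2 : 2/(2*(m:ℝ)+1) = 1/(k:ℝ) := by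
    rw [rho] at hbeq; linarith
  have hcross : 2*(k:ℝ) = 2*(m:ℝ)+1 := by
    field_simp at h2
    linarith
  have : (2*k : ℕ) = 2*m+1 := by exact_mod_cast hcross
  omega

theorem nsq_x0 : nsq x0 = 49/16 := by simp [nsq, x0]; norm_num

open ENNReal in
theorem geoDist_ge {r : ℝ} (hr : r < 1/4) (n : ℕ) :
    ((n:ℝ≥0∞)) * ENNReal.ofReal (3/2) ≤ geoDist (Om r) (pm (n+2)) x0 := by
  refine le_iInf fun γ => le_iInf fun hγc => le_iInf fun hγm => le_iInf fun hγ0 =>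
    le_iInf fun hγ1 => ?_
  have hcross := crossing hr (m := n+2) (by omega) hγc hγm ?_ ?_
  · simpa [show (n+2)-2 = n by omega] using hcross
  · rw [hγ0, pm_nsq]
    have h1 : (0:ℝ) < (n:ℝ)+2 := by positivity
    have hden : (0:ℝ) < 2*((n:ℝ)+2)+1 := by positivity
    have hcast : (((n+2:ℕ)):ℝ) = (n:ℝ)+2 := by push_cast; ring
    rw [hcast]
    apply (sq_lt_sq_iff' (by positivity) rho_pos.le).2
    rw [rho, hcast]
    have h2 : 2/(2*((n:ℝ)+2)+1) < 1/((n:ℝ)+2) := by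
      rw [div_lt_div_iff₀ hden h1]
      ring_nf
      linarith
    linarith
  · intro k hk2 hkm
    rw [hγ1, nsq_x0]
    have h32 : rho k ≤ 3/2 := rho_le_32 hk2
    nlinarith [rho_pos (k := k)]

open ENNReal in
theorem geoDiam_Om_top {r : ℝ} (hr0 : 0 < r) (hr : r < 1/4) : geoDiam (Om r) = ⊤ := by
  rw [eq_top_iff, ← ENNReal.iSup_natCast]
  refine iSup_le fun n => ?_
  have hpm : pm (n+2) ∈ Om r := pm_mem (by omega)
  have hx0 : x0 ∈ Om r := Rann_subset_Om (le_refl 1) x0_mem_Rann1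
  have h1 : (n : ℝ≥0∞) ≤ geoDist (Om r) (pm (n+2)) x0 := by
    refine le_trans ?_ (geoDist_ge hr n)
    conv_lhs => rw [← mul_one (n : ℝ≥0∞)]
    apply mul_le_mul_right
    rw [show (1:ℝ≥0∞) = ENNReal.ofReal 1 from (ENNReal.ofReal_one).symm]
    exact ENNReal.ofReal_le_ofReal (by norm_num)
  unfold geoDiam
  exact le_trans h1 (le_iSup₂_of_le (pm (n+2)) hpm (le_iSup₂_of_le x0 hx0 (le_refl _)))

end AnnComb

/-- Remove from the annulus `Ω_R = {1 < x²+y² < 4}` the closed circular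
arcs `S_{2n} = {x²+y² = (1+1/(2n))², x ≤ 1−r}` and
`S_{2n+1} = {x²+y² = (1+1/(2n+1))², x ≥ r−1}`, `n ≥ 1`, for a fixed `0 < r < 1/4`. The
resulting open set `Ω` is a bounded domain with infinite geodesic diameter. -/
theorem annulus_comb_bounded_infinite_geoDiam (r : ℝ) (hr0 : 0 < r) (hr : r < 1 / 4) :
    letI ΩR : Set (EuclideanSpace ℝ (Fin 2)) :=
      {q | 1 < (q 0) ^ 2 + (q 1) ^ 2 ∧ (q 0) ^ 2 + (q 1) ^ 2 < 4}
    letI Seven : ℕ → Set (EuclideanSpace ℝ (Fin 2)) := fun n =>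
      {q | (q 0) ^ 2 + (q 1) ^ 2 = (1 + 1 / (2 * (n + 1) : ℝ)) ^ 2 ∧ q 0 ≤ 1 - r}
    letI Sodd : ℕ → Set (EuclideanSpace ℝ (Fin 2)) := fun n =>
      {q | (q 0) ^ 2 + (q 1) ^ 2 = (1 + 1 / (2 * (n + 1) + 1 : ℝ)) ^ 2 ∧ r - 1 ≤ q 0}
    letI Ω : Set (EuclideanSpace ℝ (Fin 2)) :=
      ΩR \ ((⋃ n : ℕ, Seven n) ∪ ⋃ n : ℕ, Sodd n)
    Bornology.IsBounded Ω ∧ IsOpen Ω ∧ IsConnected Ω ∧ geoDiam Ω = ⊤ :=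
  ⟨AnnComb.bounded_Om, AnnComb.isOpen_Om, AnnComb.isConnected_Om hr0 hr,
    AnnComb.geoDiam_Om_top hr0 hr⟩
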